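/- In U(g)^{⊗3}: [σ̂_{12}, σ̂_{13}] = −[σ̂_{12}, C_{23}]. -/

import Mathlib

open scoped TensorProduct

noncomputable section

/-- `Σ i, u i ⊗ v i ⊗ 1` in `U(g)⊗U(g)⊗U(g)`: the tensor with factors in positions 1, 2. -/
def tensor12 (K : Type*) {L I : Type*} [Field K] [LieRing L] [LieAlgebra K L]
    [Fintype I] (u v : I → L) :
    UniversalEnvelopingAlgebra K L ⊗[K]
      (UniversalEnvelopingAlgebra K L ⊗[K] UniversalEnvelopingAlgebra K L) :=
  ∑ i, UniversalEnvelopingAlgebra.ι K (u i) ⊗ₜ[K]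
        (UniversalEnvelopingAlgebra.ι K (v i) ⊗ₜ[K] 1)

/-- `Σ i, u i ⊗ 1 ⊗ v i`: the tensor with factors in positions 1, 3. -/
def tensor13 (K : Type*) {L I : Type*} [Field K] [LieRing L] [LieAlgebra K L]
    [Fintype I] (u v : I → L) :
    UniversalEnvelopingAlgebra K L ⊗[K]
      (UniversalEnvelopingAlgebra K L ⊗[K] UniversalEnvelopingAlgebra K L) :=
  ∑ i, UniversalEnvelopingAlgebra.ι K (u i) ⊗ₜ[K]
        ((1 : UniversalEnvelopingAlgebra K L) ⊗ₜ[K] UniversalEnvelopingAlgebra.ι K (v i))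

/-- `Σ i, 1 ⊗ u i ⊗ v i`: the tensor with factors in positions 2, 3. -/
def tensor23 (K : Type*) {L I : Type*} [Field K] [LieRing L] [LieAlgebra K L]
    [Fintype I] (u v : I → L) :
    UniversalEnvelopingAlgebra K L ⊗[K]
      (UniversalEnvelopingAlgebra K L ⊗[K] UniversalEnvelopingAlgebra K L) :=
  ∑ i, (1 : UniversalEnvelopingAlgebra K L) ⊗ₜ[K]
        (UniversalEnvelopingAlgebra.ι K (u i) ⊗ₜ[K] UniversalEnvelopingAlgebra.ι K (v i))

section aux
variable {K L I : Type*} [Field K] [LieRing L] [LieAlgebra K L]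
    [Fintype I] [DecidableEq I]

lemma expand_left (B : LinearMap.BilinForm K L) (e : Module.Basis I K L) (e' : I → L)
    (hdual : ∀ i j, B (e i) (e' j) = if i = j then 1 else 0) (x : L) :
    ∑ k, B x (e' k) • e k = x := by
  have h : ∀ k, B x (e' k) = e.repr x k := by
    intro k
    conv_lhs => rw [← e.sum_repr x]
    simp [hdual, Finset.sum_ite_eq', mul_ite, -Module.Basis.sum_repr]
  simp_rw [h]
  exact e.sum_repr x

lemma expand_right (B : LinearMap.BilinForm K L)
    (hBsymm : ∀ x y, B x y = B y x) (hBnd : B.Nondegenerate)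
    (e : Module.Basis I K L) (e' : I → L)
    (hdual : ∀ i j, B (e i) (e' j) = if i = j then 1 else 0) (x : L) :
    ∑ k, B (e k) x • e' k = x := by
  set y := x - ∑ k, B (e k) x • e' k with hy
  have h0 : ∀ j, B (e j) y = 0 := by
    intro j
    have : (B (e j)) (∑ k, B (e k) x • e' k) = B (e j) x := by
      rw [map_sum]
      simp [hdual, mul_ite, Finset.sum_ite_eq']
    simp [hy, this]
  have hflip : B.flip y = 0 := by
    apply e.ext
    intro j
    simpa using h0 j
  have hz : ∀ z, B y z = 0 := by
    intro z
    rw [hBsymm]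
    have := DFunLike.congr_fun hflip z
    simpa using this
  have : y = 0 := hBnd.1 y hz
  rw [hy, sub_eq_zero] at this
  exact this.symm

lemma casimir_inv (B : LinearMap.BilinForm K L)
    (hBsymm : ∀ x y, B x y = B y x)
    (hBinv : ∀ x y z, B ⁅x, y⁆ z = B x ⁅y, z⁆)
    (hBnd : B.Nondegenerate)
    (e : Module.Basis I K L) (e' : I → L)
    (hdual : ∀ i j, B (e i) (e' j) = if i = j then 1 else 0) (x : L) :
    ∑ i, (⁅x, e i⁆ ⊗ₜ[K] e' i + e i ⊗ₜ[K] ⁅x, e' i⁆) = (0 : L ⊗[K] L) := by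
  have h1 : ∀ i, ⁅x, e i⁆ ⊗ₜ[K] e' i
      = ∑ k, B ⁅x, e i⁆ (e' k) • (e k ⊗ₜ[K] e' i) := by
    intro i
    conv_lhs => rw [← expand_left B e e' hdual ⁅x, e i⁆]
    rw [TensorProduct.sum_tmul]
    simp [TensorProduct.smul_tmul']
  have h2 : ∀ i, e i ⊗ₜ[K] ⁅x, e' i⁆
      = ∑ k, B (e k) ⁅x, e' i⁆ • (e i ⊗ₜ[K] e' k) := by
    intro i
    conv_lhs => rw [← expand_right B hBsymm hBnd e e' hdual ⁅x, e' i⁆]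
    rw [TensorProduct.tmul_sum]
    simp [TensorProduct.tmul_smul]
  simp_rw [h1, h2]
  rw [Finset.sum_add_distrib]
  have h3 : ∑ i, ∑ k, B (e k) ⁅x, e' i⁆ • (e i ⊗ₜ[K] e' k)
      = ∑ i, ∑ k, B (e i) ⁅x, e' k⁆ • (e k ⊗ₜ[K] e' i) := Finset.sum_comm
  rw [h3, ← Finset.sum_add_distrib]
  refine Finset.sum_eq_zero fun i _ => ?_
  rw [← Finset.sum_add_distrib]
  refine Finset.sum_eq_zero fun k _ => ?_
  rw [← add_smul]
  have : B ⁅x, e i⁆ (e' k) + B (e i) ⁅x, e' k⁆ = 0 := by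
    rw [← hBinv (e i) x (e' k)]
    have hs : (⁅e i, x⁆ : L) = -⁅x, e i⁆ := (lie_skew (e i) x).symm
    rw [hs, map_neg, LinearMap.neg_apply, add_neg_cancel]
  rw [this, zero_smul]

end aux

/-- For an involutive `B`-preserving automorphism `σ` with associated tensor
`σ̂ = Σ i, σ(e i) ⊗ e' i`, one has `[σ̂₁₂, σ̂₁₃] = −[σ̂₁₂, C₂₃]` in `U(g)^{⊗3}`. -/
theorem sigma_sigma_braid
    {K L I : Type*} [Field K] [CharZero K] [LieRing L] [LieAlgebra K L]
    [Module.Finite K L] [Fintype I] [DecidableEq I]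
    (B : LinearMap.BilinForm K L)
    (hBsymm : ∀ x y, B x y = B y x)
    (hBinv : ∀ x y z, B ⁅x, y⁆ z = B x ⁅y, z⁆)
    (hBnd : B.Nondegenerate)
    (e : Module.Basis I K L) (e' : I → L)
    (hdual : ∀ i j, B (e i) (e' j) = if i = j then 1 else 0)
    (σ : L →ₗ[K] L)
    (hσinv : ∀ x, σ (σ x) = x)
    (hσlie : ∀ x y, σ ⁅x, y⁆ = ⁅σ x, σ y⁆)
    (hσB : ∀ x y, B (σ x) (σ y) = B x y) :
    ⁅tensor12 K (fun i => σ (e i)) e', tensor13 K (fun i => σ (e i)) e'⁆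
      = -⁅tensor12 K (fun i => σ (e i)) e', tensor23 K (⇑e) e'⁆ := by
  set U := UniversalEnvelopingAlgebra K L with hU
  set ι : L → U := fun x => UniversalEnvelopingAlgebra.ι K x with hι
  -- the negated Casimir invariance, with the fixed element on the right
  have hc' : ∀ j, ∑ i, (⁅e i, e j⁆ ⊗ₜ[K] e' i + e i ⊗ₜ[K] ⁅e' i, e j⁆)
      = (0 : L ⊗[K] L) := by
    intro j
    have hc := casimir_inv B hBsymm hBinv hBnd e e' hdual (e j)
    have h : ∀ i : I, ⁅e i, e j⁆ ⊗ₜ[K] e' i + e i ⊗ₜ[K] ⁅e' i, e j⁆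
        = -(⁅e j, e i⁆ ⊗ₜ[K] e' i + e i ⊗ₜ[K] ⁅e j, e' i⁆) := by
      intro i
      have h1 : (⁅e i, e j⁆ : L) = -⁅e j, e i⁆ := (lie_skew (e i) (e j)).symm
      have h2 : (⁅e' i, e j⁆ : L) = -⁅e j, e' i⁆ := (lie_skew (e' i) (e j)).symm
      rw [h1, h2, TensorProduct.neg_tmul, TensorProduct.tmul_neg, neg_add]
    simp_rw [h]
    rw [Finset.sum_neg_distrib, hc, neg_zero]
  -- transfer to U ⊗ (U ⊗ U)
  have keyU : ∀ j, ∑ i,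
      (ι (σ ⁅e i, e j⁆) ⊗ₜ[K] (ι (e' i) ⊗ₜ[K] ι (e' j))
        + ι (σ (e i)) ⊗ₜ[K] (ι ⁅e' i, e j⁆ ⊗ₜ[K] ι (e' j)))
      = (0 : U ⊗[K] (U ⊗[K] U)) := by
    intro j
    letI := LieRing.ofAssociativeRing (A := UniversalEnvelopingAlgebra K L)
    have hΦ := congrArg
      (TensorProduct.map ((UniversalEnvelopingAlgebra.ι K).toLinearMap ∘ₗ σ)
        (((TensorProduct.mk K U U).flip (ι (e' j))) ∘ₗ
          (UniversalEnvelopingAlgebra.ι K).toLinearMap))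
      (hc' j)
    simpa only [map_sum, map_add, map_zero, TensorProduct.map_tmul, LinearMap.comp_apply,
      TensorProduct.mk_apply, LinearMap.flip_apply, LieHom.coe_toLinearMap, hι] using hΦ
  have hUcomm : ∀ x y : L, ι x * ι y - ι y * ι x = ι ⁅x, y⁆ := by
    intro x y
    letI := LieRing.ofAssociativeRing (A := UniversalEnvelopingAlgebra K L)
    have h := (UniversalEnvelopingAlgebra.ι K).map_lie x y
    calc ι x * ι y - ι y * ι x
        = ⁅(UniversalEnvelopingAlgebra.ι K) x, (UniversalEnvelopingAlgebra.ι K) y⁆ := rfl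
      _ = ι ⁅x, y⁆ := h.symm
  have ldef : ∀ x y : U ⊗[K] (U ⊗[K] U), ⁅x, y⁆ = x * y - y * x := fun x y => rfl
  have hL : ⁅tensor12 K (fun i => σ (e i)) e', tensor13 K (fun i => σ (e i)) e'⁆
      = ∑ j, ∑ i, ι (σ ⁅e i, e j⁆) ⊗ₜ[K] (ι (e' i) ⊗ₜ[K] ι (e' j)) := by
    rw [ldef]
    simp only [tensor12, tensor13, Finset.sum_mul, Finset.mul_sum,
      Algebra.TensorProduct.tmul_mul_tmul, mul_one, one_mul]
    nth_rewrite 2 [Finset.sum_comm]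
    rw [← Finset.sum_sub_distrib]
    refine Finset.sum_congr rfl fun j _ => ?_
    rw [← Finset.sum_sub_distrib]
    refine Finset.sum_congr rfl fun i _ => ?_
    rw [← TensorProduct.sub_tmul, hUcomm, ← hσlie]
  have hR : ⁅tensor12 K (fun i => σ (e i)) e', tensor23 K (⇑e) e'⁆
      = ∑ j, ∑ i, ι (σ (e i)) ⊗ₜ[K] (ι ⁅e' i, e j⁆ ⊗ₜ[K] ι (e' j)) := by
    rw [ldef]
    simp only [tensor12, tensor23, Finset.sum_mul, Finset.mul_sum,
      Algebra.TensorProduct.tmul_mul_tmul, mul_one, one_mul]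
    nth_rewrite 2 [Finset.sum_comm]
    rw [← Finset.sum_sub_distrib]
    refine Finset.sum_congr rfl fun j _ => ?_
    rw [← Finset.sum_sub_distrib]
    refine Finset.sum_congr rfl fun i _ => ?_
    rw [← TensorProduct.tmul_sub, ← TensorProduct.sub_tmul, hUcomm]
  rw [hL, hR, eq_neg_iff_add_eq_zero, ← Finset.sum_add_distrib]
  refine Finset.sum_eq_zero fun j _ => ?_
  rw [← Finset.sum_add_distrib]
  exact keyU j
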